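/- For 1d SGD with L₂ regularization of strength γ, curvature a > 0, learning rate λ > 0, and batch size S, the test loss is L_test = [aγ²/(2(a+γ))] · [2 − λ(a+γ)] / [2(a+γ) − λ((a+γ)² + (2/S)a²)] · u², and the training loss is L_train = [aγ/(2(a+γ))] · [2(a+γ) − λ((a+γ)² + (2/S)a(a−γ))] / [2(a+γ) − λ((a+γ)² + (2/S)a²)] · u², assuming the denominator 2(a+γ) − λ((a+γ)² + (2/S)a²) > 0. -/

import Mathlib

/-- 1d SGD with L₂ regularization: closed forms of training and test loss. -/
theorem stmt13 (a γ lam S u : ℝ) (ha : 0 < a) (hlam : 0 < lam) (hS : 1 ≤ S)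
    (hk : a + γ ≠ 0)
    (hden : 0 < 2 * (a + γ) - lam * ((a + γ) ^ 2 + (2 / S) * a ^ 2))
    (Sig : ℝ)
    (hSig : 2 * (a + γ) * Sig - lam * (a + γ) ^ 2 * Sig - (2 * lam / S) * a ^ 2 * Sig
      = (2 * lam / S) * a ^ 2 * γ ^ 2 * u ^ 2 / (a + γ) ^ 2) :
    ((a + γ) * Sig / 2 + a * γ * u ^ 2 / (2 * (a + γ))
      = a * γ / (2 * (a + γ))
        * ((2 * (a + γ) - lam * ((a + γ) ^ 2 + (2 / S) * a * (a - γ)))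
          / (2 * (a + γ) - lam * ((a + γ) ^ 2 + (2 / S) * a ^ 2))) * u ^ 2) ∧
    (a * Sig / 2 + a * γ ^ 2 * u ^ 2 / (2 * (a + γ) ^ 2)
      = a * γ ^ 2 / (2 * (a + γ))
        * ((2 - lam * (a + γ))
          / (2 * (a + γ) - lam * ((a + γ) ^ 2 + (2 / S) * a ^ 2))) * u ^ 2) := by
  have hS0 : S ≠ 0 := by linarith
  have hd : 2 * (a + γ) - lam * ((a + γ) ^ 2 + (2 / S) * a ^ 2) ≠ 0 := ne_of_gt hden
  have hd2 : 2 * (a + γ) * S - lam * ((a + γ) ^ 2 * S + 2 * a ^ 2) ≠ 0 := by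
    intro h; apply hd; field_simp; linear_combination h
  field_simp at hSig
  have h' : ((2 * (a + γ) - lam * (a + γ) ^ 2) * S - 2 * lam * a ^ 2) * (a + γ) ^ 2 * Sig
      = 2 * lam * a ^ 2 * γ ^ 2 * u ^ 2 := by
    have hS' : S * (((2 * (a + γ) - lam * (a + γ) ^ 2) * S - 2 * lam * a ^ 2) * (a + γ) ^ 2 * Sig)
        = S * (2 * lam * a ^ 2 * γ ^ 2 * u ^ 2) := by linear_combination S * hSig
    exact mul_left_cancel₀ hS0 hS'
  constructor
  · field_simp
    rw [eq_div_iff (by contrapose! hd2; linear_combination hd2)]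
    linear_combination h'
  · field_simp
    rw [eq_div_iff (by contrapose! hd2; linear_combination hd2)]
    linear_combination h'
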